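/- Let Ω ⊆ ℂ be open and let τ, ρ : Ω → ℝ be smooth with ρ > 0, satisfying on Ω the Liouville equation Δ₀τ + e^{2τ} = 0 and the Ribaucour equation ρ² + e^{−2τ} ρ Δ₀ρ = 1 + e^{−2τ}(ρ_x² + ρ_y²). Define the dual data ρ* := 1/ρ and τ* := τ − log ρ. Then ρ* satisfies the Ribaucour equation relative to τ* on Ω: (ρ*)² + e^{−2τ*} ρ* Δ₀ρ* = 1 + e^{−2τ*}((ρ*)_x² + (ρ*)_y²). (This is the statement that the dual of a Ribaucour surface is again a Ribaucour surface.) -/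

import Mathlib

/-- Partial derivative in the `x`-direction of a function on `ℂ ≅ ℝ²`. -/
noncomputable def pdx (u : ℂ → ℝ) (z : ℂ) : ℝ := fderiv ℝ u z 1

/-- Partial derivative in the `y`-direction of a function on `ℂ ≅ ℝ²`. -/
noncomputable def pdy (u : ℂ → ℝ) (z : ℂ) : ℝ := fderiv ℝ u z Complex.I

/-- Flat Laplacian `Δ₀u = u_xx + u_yy`. -/
noncomputable def lap (u : ℂ → ℝ) (z : ℂ) : ℝ := pdx (pdx u) z + pdy (pdy u) z

lemma pd_congr {Ω : Set ℂ} (hΩ : IsOpen Ω) {u v : ℂ → ℝ} (h : ∀ w ∈ Ω, u w = v w)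
    {z : ℂ} (hz : z ∈ Ω) (d : ℂ) : fderiv ℝ u z d = fderiv ℝ v z d := by
  rw [Filter.EventuallyEq.fderiv_eq (Filter.eventuallyEq_of_mem (hΩ.mem_nhds hz) h)]

lemma pd_inv {Ω : Set ℂ} (hΩ : IsOpen Ω) {ρ : ℂ → ℝ} (hρ : ContDiffOn ℝ (⊤ : ℕ∞) ρ Ω)
    {z : ℂ} (hz : z ∈ Ω) (hne : ρ z ≠ 0) (d : ℂ) :
    fderiv ℝ (fun w => (ρ w)⁻¹) z d = -(ρ z ^ 2)⁻¹ * fderiv ℝ ρ z d := by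
  have hd : DifferentiableAt ℝ ρ z := (hρ.contDiffAt (hΩ.mem_nhds hz)).differentiableAt (by simp)
  have h1 : HasFDerivAt (fun w => (ρ w)⁻¹)
      ((ContinuousLinearMap.smulRight (1 : ℝ →L[ℝ] ℝ) (-(ρ z ^ 2)⁻¹)).comp (fderiv ℝ ρ z)) z :=
    (hasFDerivAt_inv hne).comp z hd.hasFDerivAt
  rw [h1.fderiv]
  simp [mul_comm]

lemma diffAt_pd {Ω : Set ℂ} (hΩ : IsOpen Ω) {ρ : ℂ → ℝ} (hρ : ContDiffOn ℝ (⊤ : ℕ∞) ρ Ω)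
    {z : ℂ} (hz : z ∈ Ω) (d : ℂ) : DifferentiableAt ℝ (fun w => fderiv ℝ ρ w d) z := by
  have h1 : ContDiffOn ℝ (⊤ : ℕ∞) (fderiv ℝ ρ) Ω := by
    apply hρ.fderiv_of_isOpen hΩ
    exact_mod_cast le_top
  have h2 : ContDiffOn ℝ (⊤ : ℕ∞) (fun w => fderiv ℝ ρ w d) Ω := h1.clm_apply contDiffOn_const
  exact (h2.contDiffAt (hΩ.mem_nhds hz)).differentiableAt (by simp)

lemma pd2_inv {Ω : Set ℂ} (hΩ : IsOpen Ω) {ρ : ℂ → ℝ} (hρ : ContDiffOn ℝ (⊤ : ℕ∞) ρ Ω)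
    (hρpos : ∀ w ∈ Ω, 0 < ρ w) {z : ℂ} (hz : z ∈ Ω) (d : ℂ) :
    fderiv ℝ (fun w => fderiv ℝ (fun t => (ρ t)⁻¹) w d) z d
      = 2 * (fderiv ℝ ρ z d) ^ 2 / ρ z ^ 3
        - fderiv ℝ (fun w => fderiv ℝ ρ w d) z d / ρ z ^ 2 := by
  have hne : ρ z ≠ 0 := (hρpos z hz).ne'
  have hcong : ∀ w ∈ Ω, fderiv ℝ (fun t => (ρ t)⁻¹) w d = -(ρ w * ρ w)⁻¹ * fderiv ℝ ρ w d := by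
    intro w hw
    rw [pd_inv hΩ hρ hw (hρpos w hw).ne' d, ← sq]
  rw [pd_congr hΩ hcong hz d]
  have hd : DifferentiableAt ℝ ρ z := (hρ.contDiffAt (hΩ.mem_nhds hz)).differentiableAt (by simp)
  set D := fderiv ℝ ρ z with hD
  have hsq : HasFDerivAt (fun w => ρ w * ρ w) (ρ z • D + ρ z • D) z := hd.hasFDerivAt.mul hd.hasFDerivAt
  have hinv : HasFDerivAt (fun w => (ρ w * ρ w)⁻¹)
      ((ContinuousLinearMap.smulRight (1 : ℝ →L[ℝ] ℝ) (-((ρ z * ρ z) ^ 2)⁻¹)).comp (ρ z • D + ρ z • D)) z :=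
    (hasFDerivAt_inv (mul_ne_zero hne hne)).comp z hsq
  have hc := hinv.neg
  have hp : DifferentiableAt ℝ (fun w => fderiv ℝ ρ w d) z := diffAt_pd hΩ hρ hz d
  have hmul := hc.mul hp.hasFDerivAt
  rw [show (fun w => -(ρ w * ρ w)⁻¹ * fderiv ℝ ρ w d) = ((-fun w => (ρ w * ρ w)⁻¹) * fun w => fderiv ℝ ρ w d) from rfl, hmul.fderiv]
  simp only [ContinuousLinearMap.add_apply, ContinuousLinearMap.smul_apply,
    ContinuousLinearMap.neg_apply, ContinuousLinearMap.comp_apply,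
    ContinuousLinearMap.smulRight_apply, ContinuousLinearMap.one_apply, smul_eq_mul, Pi.neg_apply]
  field_simp
  ring


/-- if `τ` satisfies the Liouville equation `Δ₀τ + e^{2τ} = 0` and `ρ > 0`
satisfies the Ribaucour equation relative to `τ` on the open set `Ω`, then the dual data
`ρ* = 1/ρ`, `τ* = τ - log ρ` again satisfy the Ribaucour equation:
`(ρ*)² + e^{-2τ*}ρ*Δ₀ρ* = 1 + e^{-2τ*}((ρ*)_x² + (ρ*)_y²)`. The dual of a Ribaucour
surface is a Ribaucour surface. -/
theorem dual_of_ribaucour_is_ribaucour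
    (Ω : Set ℂ) (hΩ : IsOpen Ω) (τ ρ : ℂ → ℝ)
    (hτ : ContDiffOn ℝ (⊤ : ℕ∞) τ Ω) (hρ : ContDiffOn ℝ (⊤ : ℕ∞) ρ Ω)
    (hρpos : ∀ z ∈ Ω, 0 < ρ z)
    (hLiouville : ∀ z ∈ Ω, lap τ z + Real.exp (2 * τ z) = 0)
    (hRibaucour : ∀ z ∈ Ω, ρ z ^ 2 + Real.exp (-(2 * τ z)) * ρ z * lap ρ z
      = 1 + Real.exp (-(2 * τ z)) * (pdx ρ z ^ 2 + pdy ρ z ^ 2))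
    (ρs τs : ℂ → ℝ)
    (hρs : ∀ z ∈ Ω, ρs z = 1 / ρ z)
    (hτs : ∀ z ∈ Ω, τs z = τ z - Real.log (ρ z)) :
    ∀ z ∈ Ω, ρs z ^ 2 + Real.exp (-(2 * τs z)) * ρs z * lap ρs z
      = 1 + Real.exp (-(2 * τs z)) * (pdx ρs z ^ 2 + pdy ρs z ^ 2) := by
  intro z hz
  have hr : 0 < ρ z := hρpos z hz
  have hne : ρ z ≠ 0 := hr.ne'
  have hcong : ∀ w ∈ Ω, ρs w = (ρ w)⁻¹ := by
    intro w hw; rw [hρs w hw, one_div]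
  -- first derivatives
  have hpdx : pdx ρs z = -(ρ z ^ 2)⁻¹ * pdx ρ z := by
    show fderiv ℝ ρs z 1 = _
    rw [pd_congr hΩ hcong hz 1, pd_inv hΩ hρ hz hne 1]; rfl
  have hpdy : pdy ρs z = -(ρ z ^ 2)⁻¹ * pdy ρ z := by
    show fderiv ℝ ρs z Complex.I = _
    rw [pd_congr hΩ hcong hz Complex.I, pd_inv hΩ hρ hz hne Complex.I]; rfl
  -- second derivatives
  have hcongpd : ∀ d : ℂ, ∀ w ∈ Ω,
      fderiv ℝ ρs w d = fderiv ℝ (fun t => (ρ t)⁻¹) w d :=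
    fun d w hw => pd_congr hΩ hcong hw d
  have hlap : lap ρs z = 2 * (pdx ρ z ^ 2 + pdy ρ z ^ 2) / ρ z ^ 3 - lap ρ z / ρ z ^ 2 := by
    show fderiv ℝ (fun w => fderiv ℝ ρs w 1) z 1
        + fderiv ℝ (fun w => fderiv ℝ ρs w Complex.I) z Complex.I = _
    rw [pd_congr hΩ (hcongpd 1) hz 1, pd_congr hΩ (hcongpd Complex.I) hz Complex.I,
      pd2_inv hΩ hρ hρpos hz 1, pd2_inv hΩ hρ hρpos hz Complex.I]
    show _ = 2 * ((fderiv ℝ ρ z 1) ^ 2 + (fderiv ℝ ρ z Complex.I) ^ 2) / ρ z ^ 3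
        - (fderiv ℝ (fun w => fderiv ℝ ρ w 1) z 1
          + fderiv ℝ (fun w => fderiv ℝ ρ w Complex.I) z Complex.I) / ρ z ^ 2
    ring
  -- exponential identity
  have hexp : Real.exp (-(2 * τs z)) = Real.exp (-(2 * τ z)) * ρ z ^ 2 := by
    rw [hτs z hz, show -(2 * (τ z - Real.log (ρ z)))
        = -(2 * τ z) + (Real.log (ρ z) + Real.log (ρ z)) by ring,
      Real.exp_add, Real.exp_add, Real.exp_log hr]
    ring
  have hrib := hRibaucour z hz
  rw [hρs z hz, hexp, hlap, hpdx, hpdy]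
  have hE : 0 < Real.exp (-(2 * τ z)) := Real.exp_pos _
  field_simp
  linear_combination (-1) * hrib
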